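/- There exists a P-solvable MAPF instance such that the minimum makespan over all solutions is strictly smaller than the makespan of every solution that is consistent with some priority ordering; i.e., prioritized planning is suboptimal for the makespan objective in general on the class of P-solvable MAPF instances, no matter which priority ordering is used. -/

import Mathlib

/-- Two (space-time) paths have a vertex collision: same vertex at the same time. -/
def VCol {V : Type} (π σ : ℕ → V) : Prop := ∃ t, π t = σ t

/-- Two (space-time) paths have an edge collision: they traverse the same edge in
opposite directions at the same time. -/
def ECol {V : Type} (π σ : ℕ → V) : Prop := ∃ t, π t = σ (t + 1) ∧ π (t + 1) = σ t

/-- Two paths collide if they have a vertex collision or an edge collision. -/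
def Collide {V : Type} (π σ : ℕ → V) : Prop := VCol π σ ∨ ECol π σ

/-- `π : ℕ → V` is a path from `s` to `t` in `G`: it starts at `s`, at each time step
it stays put or moves along an edge of `G`, and it is eventually always at `t`. -/
def IsPathFun {V : Type} (G : SimpleGraph V) (s t : V) (π : ℕ → V) : Prop :=
  π 0 = s ∧ (∀ n, π (n + 1) = π n ∨ G.Adj (π n) (π (n + 1))) ∧ ∃ T, ∀ n ≥ T, π n = t

/-- The arrival time of a path at a target vertex `tgt`: the least time `T` such that
the path is at `tgt` at all times `≥ T`. -/
noncomputable def arrivalTime {V : Type} (tgt : V) (π : ℕ → V) : ℕ :=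
  sInf {T | ∀ n ≥ T, π n = tgt}

/-- A MAPF instance: a connected undirected graph and `M` agents with pairwise distinct
start vertices and pairwise distinct target vertices. -/
structure MAPF where
  V : Type
  G : SimpleGraph V
  conn : G.Connected
  M : ℕ
  s : Fin M → V
  t : Fin M → V
  s_inj : Function.Injective s
  t_inj : Function.Injective t

/-- `π` is a path for agent `i` of the MAPF instance `P`. -/
def MAPF.IsPath (P : MAPF) (i : Fin P.M) (π : ℕ → P.V) : Prop :=
  IsPathFun P.G (P.s i) (P.t i) π

/-- The arrival time of agent `i`'s path `π`. -/
noncomputable def MAPF.arr (P : MAPF) (i : Fin P.M) (π : ℕ → P.V) : ℕ :=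
  arrivalTime (P.t i) π

/-- A solution: a path for each agent such that no two paths collide. -/
def MAPF.Solution (P : MAPF) (π : Fin P.M → ℕ → P.V) : Prop :=
  (∀ i, P.IsPath i (π i)) ∧ ∀ i j, i ≠ j → ¬ Collide (π i) (π j)

/-- A priority ordering: a strict partial order (irreflexive and transitive relation)
on the agents. -/
def IsPO {M : ℕ} (r : Fin M → Fin M → Prop) : Prop :=
  (∀ i, ¬ r i i) ∧ ∀ i j k, r i j → r j k → r i k

/-- A total priority ordering: a strict total order on the agents. -/
def IsTotalPO {M : ℕ} (r : Fin M → Fin M → Prop) : Prop :=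
  IsPO r ∧ ∀ i j : Fin M, i ≠ j → r i j ∨ r j i

/-- A plan `π` is consistent with a priority ordering `r`: for every agent `i`, the
arrival time of `π i` is the minimum arrival time over all paths for agent `i` that
have no collision with `π j` for every higher-priority agent `j` (`r j i`). -/
def MAPF.Consistent (P : MAPF) (π : Fin P.M → ℕ → P.V)
    (r : Fin P.M → Fin P.M → Prop) : Prop :=
  ∀ i, IsLeast {T | ∃ σ, P.IsPath i σ ∧ (∀ j, r j i → ¬ Collide σ (π j)) ∧ P.arr i σ = T}
    (P.arr i (π i))

/-- A MAPF instance is P-solvable if it admits a solution consistent with some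
priority ordering. -/
def MAPF.PSolvable (P : MAPF) : Prop :=
  ∃ π r, IsPO r ∧ P.Solution π ∧ P.Consistent π r

/-- The flowtime of a plan: the sum of the arrival times of all agents. -/
noncomputable def MAPF.flowtime (P : MAPF) (π : Fin P.M → ℕ → P.V) : ℕ :=
  ∑ i, P.arr i (π i)

/-- The makespan of a plan: the maximum of the arrival times of all agents. -/
noncomputable def MAPF.makespan (P : MAPF) (π : Fin P.M → ℕ → P.V) : ℕ :=
  Finset.univ.sup fun i => P.arr i (π i)

/-- A MAPF instance is well-formed if every agent has a (finite) walk from its start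
vertex to its target vertex that visits neither the start vertex nor the target vertex
of any other agent. -/
def MAPF.WellFormed (P : MAPF) : Prop :=
  ∀ i, ∃ w : P.G.Walk (P.s i) (P.t i),
    ∀ j, j ≠ i → P.s j ∉ w.support ∧ P.t j ∉ w.support

abbrev V8 := Fin 8

def nbrs (v : V8) : List V8 :=
  [[1],[0,3,7],[3,4],[1,2],[2,5],[4,6],[5,7],[6,1]].getD v.val []

def G8 : SimpleGraph V8 where
  Adj v w := w ∈ nbrs v
  symm := by
    have h : ∀ v w : V8, w ∈ nbrs v → v ∈ nbrs w := by decide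
    exact ⟨fun v w hw => h v w hw⟩
  loopless := by
    have h : ∀ v : V8, ¬ v ∈ nbrs v := by decide
    exact ⟨h⟩

instance : DecidableRel G8.Adj := fun a b => inferInstanceAs (Decidable (b ∈ nbrs a))

lemma reach1 : ∀ v : V8, G8.Reachable v 1 := by
  have h : ∀ a b : V8, b ∈ nbrs a → G8.Reachable a b := fun a b hb => SimpleGraph.Adj.reachable hb
  intro v
  fin_cases v
  · exact h 0 1 (by decide)
  · exact SimpleGraph.Reachable.refl 1
  · exact (h 2 3 (by decide)).trans (h 3 1 (by decide))
  · exact h 3 1 (by decide)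
  · exact (h 4 2 (by decide)).trans ((h 2 3 (by decide)).trans (h 3 1 (by decide)))
  · exact (h 5 4 (by decide)).trans ((h 4 2 (by decide)).trans ((h 2 3 (by decide)).trans (h 3 1 (by decide))))
  · exact (h 6 7 (by decide)).trans (h 7 1 (by decide))
  · exact h 7 1 (by decide)

lemma conn8 : G8.Connected := ⟨fun u v => (reach1 u).trans (reach1 v).symm⟩

def step8 (v : V8) : List V8 := v :: nbrs v

def win (π : ℕ → V8) : ℕ → List V8
  | 0 => [π 0]
  | m+1 => win π m ++ [π (m+1)]

lemma win_length (π : ℕ → V8) (m : ℕ) : (win π m).length = m + 1 := by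
  induction m with
  | zero => simp [win]
  | succ m ih => simp [win, ih]

lemma win_getLastD (π : ℕ → V8) (m : ℕ) (d : V8) : (win π m).getLastD d = π m := by
  cases m with
  | zero => simp [win]
  | succ m => rw [win, List.getLastD_concat]

lemma win_getD (π : ℕ → V8) {t m : ℕ} (h : t ≤ m) (d : V8) : (win π m).getD t d = π t := by
  induction m with
  | zero => simp_all [win]
  | succ m ih =>
    rcases Nat.lt_or_ge t (m+1) with h' | h'
    · rw [win, List.getD_append _ _ _ _ (by rw [win_length]; omega)]
      exact ih (by omega)
    · have ht : t = m + 1 := by omega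
      subst ht
      rw [win, List.getD_append_right _ _ _ _ (by rw [win_length])]
      simp [win_length]

def gen (s tgt : V8) (a : ℕ) : ℕ → List (List V8)
  | 0 => [[s]]
  | m+1 => (gen s tgt a m).flatMap fun p =>
      ((step8 (p.getLastD 0)).filter fun w => decide (a ≤ m + 1 → w = tgt)).map fun w => p ++ [w]

lemma win_mem {π : ℕ → V8} {s tgt : V8} {a : ℕ} (h0 : π 0 = s)
    (hst : ∀ n, π (n+1) ∈ step8 (π n)) (hset : ∀ n ≥ a, π n = tgt) :
    ∀ m, win π m ∈ gen s tgt a m := by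
  intro m
  induction m with
  | zero => simp [win, gen, h0]
  | succ m ih =>
    refine List.mem_flatMap.2 ⟨win π m, ih, List.mem_map.2 ⟨π (m+1), List.mem_filter.2 ⟨?_, ?_⟩, rfl⟩⟩
    · rw [win_getLastD]; exact hst m
    · exact decide_eq_true (fun hh => hset _ hh)

def collB (p q : List V8) : Bool :=
  ((List.range 6).any fun t => p.getD t 0 == q.getD t 0) ||
  ((List.range 5).any fun t => (p.getD t 0 == q.getD (t+1) 0) && (p.getD (t+1) 0 == q.getD t 0))

lemma F0 : ((gen 0 3 2 5).all fun p => (gen 2 1 4 5).all fun q => collB p q) = true := by decide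
lemma F1 : ((gen 0 3 4 5).all fun p => (gen 2 1 2 5).all fun q => collB p q) = true := by decide

lemma collB_sound {π σ : ℕ → V8} (h : collB (win π 5) (win σ 5) = true) : Collide π σ := by
  simp only [collB, Bool.or_eq_true, List.any_eq_true, List.mem_range, Bool.and_eq_true,
    beq_iff_eq] at h
  rcases h with ⟨t, ht, he⟩ | ⟨t, ht, h1, h2⟩
  · rw [win_getD _ (by omega), win_getD _ (by omega)] at he
    exact Or.inl ⟨t, he⟩
  · rw [win_getD _ (by omega), win_getD _ (by omega)] at h1
    rw [win_getD _ (by omega), win_getD _ (by omega)] at h2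
    exact Or.inr ⟨t, h1, h2⟩

lemma Collide.symm' {V : Type} {π σ : ℕ → V} (h : Collide π σ) : Collide σ π := by
  rcases h with ⟨t, ht⟩ | ⟨t, h1, h2⟩
  · exact Or.inl ⟨t, ht.symm⟩
  · exact Or.inr ⟨t, h2.symm, h1.symm⟩

def pathOf (l : List V8) (d : V8) : ℕ → V8 := fun n => l.getD n d

lemma pathOf_ge (l : List V8) (d : V8) {n : ℕ} (h : l.length ≤ n) : pathOf l d n = d :=
  List.getD_eq_default _ _ h

lemma steps_mem {π : ℕ → V8} (h : ∀ n, π (n+1) = π n ∨ G8.Adj (π n) (π (n+1))) :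
    ∀ n, π (n+1) ∈ step8 (π n) := by
  intro n
  rcases h n with he | ha
  · exact List.mem_cons.2 (Or.inl he)
  · exact List.mem_cons.2 (Or.inr ha)

/-- the four explicit paths -/
def pc0 : ℕ → V8 := pathOf [0,1] 3
def pc1 : ℕ → V8 := pathOf [2,4,5,6,7] 1
def ps1 : ℕ → V8 := pathOf [2,3] 1
def po0 : ℕ → V8 := pathOf [0,0,0,1] 3
def po1 : ℕ → V8 := pathOf [2,3,1,7] 1

lemma path_pc0 : IsPathFun G8 0 3 pc0 := by
  refine ⟨rfl, ?_, 2, fun n hn => pathOf_ge _ _ hn⟩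
  intro n
  rcases Nat.lt_or_ge n 2 with h | h
  · interval_cases n <;> decide
  · exact Or.inl ((pathOf_ge _ _ (le_trans h (Nat.le_succ n))).trans (pathOf_ge _ _ h).symm)

lemma path_pc1 : IsPathFun G8 2 1 pc1 := by
  refine ⟨rfl, ?_, 5, fun n hn => pathOf_ge _ _ hn⟩
  intro n
  rcases Nat.lt_or_ge n 5 with h | h
  · interval_cases n <;> decide
  · exact Or.inl ((pathOf_ge _ _ (le_trans h (Nat.le_succ n))).trans (pathOf_ge _ _ h).symm)

lemma path_ps1 : IsPathFun G8 2 1 ps1 := by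
  refine ⟨rfl, ?_, 2, fun n hn => pathOf_ge _ _ hn⟩
  intro n
  rcases Nat.lt_or_ge n 2 with h | h
  · interval_cases n <;> decide
  · exact Or.inl ((pathOf_ge _ _ (le_trans h (Nat.le_succ n))).trans (pathOf_ge _ _ h).symm)

lemma path_po0 : IsPathFun G8 0 3 po0 := by
  refine ⟨rfl, ?_, 4, fun n hn => pathOf_ge _ _ hn⟩
  intro n
  rcases Nat.lt_or_ge n 4 with h | h
  · interval_cases n <;> decide
  · exact Or.inl ((pathOf_ge _ _ (le_trans h (Nat.le_succ n))).trans (pathOf_ge _ _ h).symm)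

lemma path_po1 : IsPathFun G8 2 1 po1 := by
  refine ⟨rfl, ?_, 4, fun n hn => pathOf_ge _ _ hn⟩
  intro n
  rcases Nat.lt_or_ge n 4 with h | h
  · interval_cases n <;> decide
  · exact Or.inl ((pathOf_ge _ _ (le_trans h (Nat.le_succ n))).trans (pathOf_ge _ _ h).symm)

lemma arrival_eq {tgt : V8} {π : ℕ → V8} {a : ℕ} (h1 : ∀ n ≥ a, π n = tgt)
    (ha : 0 < a) (h2 : π (a - 1) ≠ tgt) : arrivalTime tgt π = a := by
  have hmem : ∀ n ≥ arrivalTime tgt π, π n = tgt :=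
    Nat.sInf_mem (⟨a, h1⟩ : {T | ∀ n ≥ T, π n = tgt}.Nonempty)
  refine le_antisymm (Nat.sInf_le h1) ?_
  by_contra hlt
  push_neg at hlt
  exact h2 (hmem (a - 1) (by omega))

lemma arrival_settle {tgt : V8} {π : ℕ → V8} (hne : ∃ T, ∀ n ≥ T, π n = tgt) :
    ∀ n ≥ arrivalTime tgt π, π n = tgt := by
  obtain ⟨T, hT⟩ := hne
  exact Nat.sInf_mem (⟨T, hT⟩ : {T | ∀ n ≥ T, π n = tgt}.Nonempty)

lemma early0 {π : ℕ → V8} (h : IsPathFun G8 0 3 π) : 2 ≤ arrivalTime 3 π := by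
  by_contra hlt
  push_neg at hlt
  have hset := arrival_settle (tgt := 3) (π := π) h.2.2
  have h1 : π 1 = 3 := hset 1 (by omega)
  rcases h.2.1 0 with he | ha
  · rw [h1, h.1] at he
    exact absurd he (by decide)
  · rw [h.1, h1] at ha
    exact absurd ha (by decide)

lemma early1 {π : ℕ → V8} (h : IsPathFun G8 2 1 π) : 2 ≤ arrivalTime 1 π := by
  by_contra hlt
  push_neg at hlt
  have hset := arrival_settle (tgt := 1) (π := π) h.2.2
  have h1 : π 1 = 1 := hset 1 (by omega)
  rcases h.2.1 0 with he | ha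
  · rw [h1, h.1] at he
    exact absurd he (by decide)
  · rw [h.1, h1] at ha
    exact absurd ha (by decide)

lemma nocol_c : ¬ Collide pc0 pc1 := by
  rintro (⟨t, ht⟩ | ⟨t, h1, h2⟩)
  · rcases Nat.lt_or_ge t 6 with h | h
    · revert ht; interval_cases t <;> decide
    · rw [pc0, pc1, pathOf_ge _ _ (show ([0,1] : List V8).length ≤ t by simp only [List.length_cons, List.length_nil]; omega),
        pathOf_ge _ _ (show ([2,4,5,6,7] : List V8).length ≤ t by simp only [List.length_cons, List.length_nil]; omega)] at ht
      exact absurd ht (by decide)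
  · rcases Nat.lt_or_ge t 6 with h | h
    · revert h1 h2; interval_cases t <;> decide
    · rw [pc0, pc1, pathOf_ge _ _ (show ([0,1] : List V8).length ≤ t by simp only [List.length_cons, List.length_nil]; omega),
        pathOf_ge _ _ (show ([2,4,5,6,7] : List V8).length ≤ t + 1 by simp only [List.length_cons, List.length_nil]; omega)] at h1
      exact absurd h1 (by decide)

lemma nocol_o : ¬ Collide po0 po1 := by
  rintro (⟨t, ht⟩ | ⟨t, h1, h2⟩)
  · rcases Nat.lt_or_ge t 6 with h | h
    · revert ht; interval_cases t <;> decide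
    · rw [po0, po1, pathOf_ge _ _ (show ([0,0,0,1] : List V8).length ≤ t by simp only [List.length_cons, List.length_nil]; omega),
        pathOf_ge _ _ (show ([2,3,1,7] : List V8).length ≤ t by simp only [List.length_cons, List.length_nil]; omega)] at ht
      exact absurd ht (by decide)
  · rcases Nat.lt_or_ge t 6 with h | h
    · revert h1 h2; interval_cases t <;> decide
    · rw [po0, po1, pathOf_ge _ _ (show ([0,0,0,1] : List V8).length ≤ t by simp only [List.length_cons, List.length_nil]; omega),
        pathOf_ge _ _ (show ([2,3,1,7] : List V8).length ≤ t + 1 by simp only [List.length_cons, List.length_nil]; omega)] at h1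
      exact absurd h1 (by decide)

def P8 : MAPF where
  V := V8
  G := G8
  conn := conn8
  M := 2
  s := ![0, 2]
  t := ![3, 1]
  s_inj := by
    have h : ∀ a b : Fin 2, (![0, 2] : Fin 2 → V8) a = ![0, 2] b → a = b := by decide
    exact fun a b => h a b
  t_inj := by
    have h : ∀ a b : Fin 2, (![3, 1] : Fin 2 → V8) a = ![3, 1] b → a = b := by decide
    exact fun a b => h a b

instance : NeZero P8.M := ⟨by decide⟩

lemma arr_pc0 : P8.arr 0 pc0 = 2 :=
  arrival_eq (fun n hn => pathOf_ge _ _ hn) (by omega) (by show pc0 (2 - 1) ≠ (3 : V8); decide)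

lemma arr_pc1 : P8.arr 1 pc1 = 5 :=
  arrival_eq (fun n hn => pathOf_ge _ _ hn) (by omega) (by show pc1 (5 - 1) ≠ (1 : V8); decide)

lemma arr_ps1 : P8.arr 1 ps1 = 2 :=
  arrival_eq (fun n hn => pathOf_ge _ _ hn) (by omega) (by show ps1 (2 - 1) ≠ (1 : V8); decide)

lemma arr_po0 : P8.arr 0 po0 = 4 :=
  arrival_eq (fun n hn => pathOf_ge _ _ (by simp only [List.length_cons, List.length_nil]; omega))
    (by omega) (by show po0 (4 - 1) ≠ (3 : V8); decide)

lemma arr_po1 : P8.arr 1 po1 = 4 :=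
  arrival_eq (fun n hn => pathOf_ge _ _ (by simp only [List.length_cons, List.length_nil]; omega))
    (by omega) (by show po1 (4 - 1) ≠ (1 : V8); decide)

def πc : Fin P8.M → ℕ → P8.V := ![pc0, pc1]
def πo : Fin P8.M → ℕ → P8.V := ![po0, po1]
def rc : Fin P8.M → Fin P8.M → Prop := fun a b => a = 0 ∧ b = 1

lemma sol_c : P8.Solution πc := by
  constructor
  · intro i
    fin_cases i
    · exact path_pc0
    · exact path_pc1
  · intro i j hne
    fin_cases i <;> fin_cases j
    · exact absurd rfl hne
    · exact nocol_c
    · exact fun h => nocol_c h.symm'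
    · exact absurd rfl hne

lemma sol_o : P8.Solution πo := by
  constructor
  · intro i
    fin_cases i
    · exact path_po0
    · exact path_po1
  · intro i j hne
    fin_cases i <;> fin_cases j
    · exact absurd rfl hne
    · exact nocol_o
    · exact fun h => nocol_o h.symm'
    · exact absurd rfl hne

lemma cons_c : P8.Consistent πc rc := by
  intro i
  fin_cases i
  · constructor
    · exact ⟨pc0, path_pc0, fun j hj => absurd hj.2 (by decide), rfl⟩
    · rintro T ⟨σ, hσ, -, rfl⟩
      exact le_trans (le_of_eq arr_pc0) (early0 hσ)
  · constructor
    · refine ⟨pc1, path_pc1, ?_, rfl⟩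
      rintro j ⟨h1, -⟩
      subst h1
      exact fun h => nocol_c h.symm'
    · rintro T ⟨σ, hσ, hav, rfl⟩
      suffices hs : 5 ≤ P8.arr 1 σ by
        exact le_trans (le_of_eq (arr_pc1 : P8.arr 1 pc1 = 5)) hs
      by_contra hlt
      have hlt2 : arrivalTime (1 : V8) σ ≤ 4 := Nat.lt_succ_iff.mp (Nat.lt_of_not_le hlt)
      have hset : ∀ n ≥ 4, σ n = (1 : V8) := fun n hn =>
        arrival_settle hσ.2.2 n (le_trans hlt2 hn)
      have hw0 : win pc0 5 ∈ gen 0 3 2 5 :=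
        win_mem rfl (steps_mem path_pc0.2.1) (fun n hn => pathOf_ge _ _ hn) 5
      have hwσ : win σ 5 ∈ gen 2 1 4 5 := win_mem hσ.1 (steps_mem hσ.2.1) hset 5
      have hcb := List.all_eq_true.1 (List.all_eq_true.1 F0 _ hw0) _ hwσ
      exact hav 0 ⟨rfl, rfl⟩ ((collB_sound hcb).symm')

lemma po_rc : IsPO rc := by
  constructor
  · rintro i ⟨h1, h2⟩
    rw [h1] at h2
    exact absurd h2 (by decide)
  · rintro i j k ⟨hi, -⟩ ⟨-, hk⟩
    exact ⟨hi, hk⟩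

lemma ms_o : P8.makespan πo = 4 := by
  unfold MAPF.makespan
  apply le_antisymm
  · apply Finset.sup_le
    intro i _
    fin_cases i
    · exact le_of_eq arr_po0
    · exact le_of_eq arr_po1
  · exact le_trans (le_of_eq arr_po0.symm)
      (Finset.le_sup (f := fun i => P8.arr i (πo i)) (Finset.mem_univ 0))

/-- Prioritized planning is suboptimal for the makespan objective on P-solvable MAPF
instances: there is a P-solvable instance with a solution whose makespan is strictly
smaller than the makespan of every solution consistent with any priority ordering. -/
theorem stmt9 :
    ∃ P : MAPF, P.PSolvable ∧ ∃ πopt, P.Solution πopt ∧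
      ∀ (π : Fin P.M → ℕ → P.V) (r : Fin P.M → Fin P.M → Prop),
        IsPO r → P.Solution π → P.Consistent π r →
          P.makespan πopt < P.makespan π := by
  refine ⟨P8, ⟨πc, rc, po_rc, sol_c, cons_c⟩, πo, sol_o, ?_⟩
  intro π r hr hSol hCons
  rw [ms_o]
  have hcase : ¬ r 1 0 ∨ ¬ r 0 1 := by
    by_contra hcc
    push_neg at hcc
    exact hr.1 0 (hr.2 0 1 0 hcc.2 hcc.1)
  have hp0 : IsPathFun G8 0 3 (π 0) := hSol.1 0
  have hp1 : IsPathFun G8 2 1 (π 1) := hSol.1 1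
  rcases hcase with h | h
  · -- agent 0 has no higher-priority agent
    have hub : P8.arr 0 (π 0) ≤ 2 := by
      refine (hCons 0).2 ⟨pc0, path_pc0, ?_, arr_pc0⟩
      intro j hj
      fin_cases j
      · exact absurd hj (hr.1 0)
      · exact absurd hj h
    have heq : arrivalTime (3 : V8) (π 0) = 2 := le_antisymm hub (early0 hp0)
    have hset0 : ∀ n ≥ 2, π 0 n = (3 : V8) := fun n hn =>
      arrival_settle hp0.2.2 n (le_trans heq.le hn)
    have h5 : 5 ≤ P8.arr 1 (π 1) := by
      by_contra hlt
      have hlt2 : arrivalTime (1 : V8) (π 1) ≤ 4 := Nat.lt_succ_iff.mp (Nat.lt_of_not_le hlt)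
      have hset1 : ∀ n ≥ 4, π 1 n = (1 : V8) := fun n hn =>
        arrival_settle hp1.2.2 n (le_trans hlt2 hn)
      have hw0 : win (π 0) 5 ∈ gen 0 3 2 5 := win_mem hp0.1 (steps_mem hp0.2.1) hset0 5
      have hw1 : win (π 1) 5 ∈ gen 2 1 4 5 := win_mem hp1.1 (steps_mem hp1.2.1) hset1 5
      have hcb := List.all_eq_true.1 (List.all_eq_true.1 F0 _ hw0) _ hw1
      exact hSol.2 0 1 (by decide) (collB_sound hcb)
    exact lt_of_lt_of_le (by omega)
      (le_trans h5 (Finset.le_sup (f := fun i => P8.arr i (π i)) (Finset.mem_univ 1)))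
  · -- agent 1 has no higher-priority agent
    have hub : P8.arr 1 (π 1) ≤ 2 := by
      refine (hCons 1).2 ⟨ps1, path_ps1, ?_, arr_ps1⟩
      intro j hj
      fin_cases j
      · exact absurd hj h
      · exact absurd hj (hr.1 1)
    have heq : arrivalTime (1 : V8) (π 1) = 2 := le_antisymm hub (early1 hp1)
    have hset1 : ∀ n ≥ 2, π 1 n = (1 : V8) := fun n hn =>
      arrival_settle hp1.2.2 n (le_trans heq.le hn)
    have h5 : 5 ≤ P8.arr 0 (π 0) := by
      by_contra hlt
      have hlt2 : arrivalTime (3 : V8) (π 0) ≤ 4 := Nat.lt_succ_iff.mp (Nat.lt_of_not_le hlt)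
      have hset0 : ∀ n ≥ 4, π 0 n = (3 : V8) := fun n hn =>
        arrival_settle hp0.2.2 n (le_trans hlt2 hn)
      have hw0 : win (π 0) 5 ∈ gen 0 3 4 5 := win_mem hp0.1 (steps_mem hp0.2.1) hset0 5
      have hw1 : win (π 1) 5 ∈ gen 2 1 2 5 := win_mem hp1.1 (steps_mem hp1.2.1) hset1 5
      have hcb := List.all_eq_true.1 (List.all_eq_true.1 F1 _ hw0) _ hw1
      exact hSol.2 0 1 (by decide) (collB_sound hcb)
    exact lt_of_lt_of_le (by omega)
      (le_trans h5 (Finset.le_sup (f := fun i => P8.arr i (π i)) (Finset.mem_univ 0)))
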